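/- Let n ≥ 0, r ≥ 1, let S be an arbitrary subset of ℝ^r, and let F be a homogeneous polynomial of degree n+2 in r real variables such that every iterated partial derivative of F of order ≤ n (including F itself) vanishes at every point of S. Then F vanishes at every linear combination of n+1 points of S: for all p₀,…,p_n ∈ S and all y₀,…,y_n ∈ ℝ, F(y₀p₀ + y₁p₁ + … + y_np_n) = 0. (This is the key step showing that the n-th prolongation of the space of quadratics vanishing on a variety V is contained in the degree-(n+2) part of the ideal of the (n+1)-th secant variety of V.) -/

import Mathlib

open MvPolynomial Finset

namespace Stmt9Aux

variable {σ : Type*} [Fintype σ] [DecidableEq σ]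

lemma degree_univ (s : σ →₀ ℕ) : s.degree = ∑ i : σ, s i := by
  rw [Finsupp.degree]
  exact Finset.sum_subset (Finset.subset_univ _)
    fun x _ hx => Finsupp.notMem_support_iff.mp hx

lemma pderiv_comm (i j : σ) (f : MvPolynomial σ ℝ) :
    pderiv i (pderiv j f) = pderiv j (pderiv i f) := by
  induction f using MvPolynomial.induction_on' with
  | monomial s a =>
    by_cases hij : i = j
    · subst hij; rfl
    · simp only [pderiv_monomial]
      have h1 : (s - Finsupp.single j 1 : σ →₀ ℕ) i = s i := by
        rw [Finsupp.tsub_apply, Finsupp.single_eq_of_ne' (Ne.symm hij), tsub_zero]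
      have h2 : (s - Finsupp.single i 1 : σ →₀ ℕ) j = s j := by
        rw [Finsupp.tsub_apply, Finsupp.single_eq_of_ne' hij, tsub_zero]
      rw [h1, h2, tsub_right_comm]
      ring_nf
  | add f g hf hg => simp [map_add, hf, hg]

/-- Directional derivative operator. -/
noncomputable def Dop (v : σ → ℝ) (Q : MvPolynomial σ ℝ) : MvPolynomial σ ℝ :=
  ∑ i, C (v i) * pderiv i Q

lemma Dop_add (v : σ → ℝ) (Q R : MvPolynomial σ ℝ) :
    Dop v (Q + R) = Dop v Q + Dop v R := by
  simp [Dop, map_add, mul_add, Finset.sum_add_distrib]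

lemma Dop_C_mul (v : σ → ℝ) (c : ℝ) (Q : MvPolynomial σ ℝ) :
    Dop v (C c * Q) = C c * Dop v Q := by
  simp only [Dop, pderiv_C_mul, Finset.mul_sum]
  exact Finset.sum_congr rfl fun i _ => by ring

lemma Dop_sum {ι : Type*} [DecidableEq ι] (v : σ → ℝ) (s : Finset ι)
    (g : ι → MvPolynomial σ ℝ) :
    Dop v (∑ x ∈ s, g x) = ∑ x ∈ s, Dop v (g x) := by
  induction s using Finset.induction_on with
  | empty => simp [Dop]
  | insert _ _ hx ih => simp only [Finset.sum_insert hx, Dop_add, ih]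

lemma Dop_comm (v w : σ → ℝ) (Q : MvPolynomial σ ℝ) :
    Dop v (Dop w Q) = Dop w (Dop v Q) := by
  classical
  simp only [Dop, map_sum, pderiv_C_mul, Finset.mul_sum]
  rw [Finset.sum_comm]
  refine Finset.sum_congr rfl fun i _ => Finset.sum_congr rfl fun j _ => ?_
  rw [pderiv_comm i j]
  ring

lemma isHomogeneous_pderiv {f : MvPolynomial σ ℝ} {d : ℕ} (hf : f.IsHomogeneous (d + 1))
    (i : σ) : (pderiv i f).IsHomogeneous d := by
  rw [f.as_sum, map_sum]
  apply MvPolynomial.IsHomogeneous.sum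
  intro s hs
  rw [pderiv_monomial]
  by_cases hsi : s i = 0
  · rw [hsi]; simpa using isHomogeneous_zero _ _ _
  · apply isHomogeneous_monomial
    have hdeg : s.degree = d + 1 := by
      rw [Finsupp.degree_eq_weight_one]
      exact hf (MvPolynomial.mem_support_iff.mp hs)
    have hle : Finsupp.single i 1 ≤ s :=
      Finsupp.single_le_iff.mpr (Nat.one_le_iff_ne_zero.mpr hsi)
    have hs' : s - Finsupp.single i 1 + Finsupp.single i 1 = s := tsub_add_cancel_of_le hle
    have hsingle : ∑ j : σ, (Finsupp.single i 1 : σ →₀ ℕ) j = 1 := by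
      rw [Finset.sum_eq_single_of_mem i (Finset.mem_univ i)
        (fun b _ hb => Finsupp.single_eq_of_ne' (Ne.symm hb))]
      exact Finsupp.single_eq_same
    have hsum : ∑ j : σ, s j = (∑ j : σ, (s - Finsupp.single i 1 : σ →₀ ℕ) j) + 1 :=
      calc ∑ j : σ, s j
          = ∑ j : σ, ((s - Finsupp.single i 1) + Finsupp.single i 1 : σ →₀ ℕ) j := by rw [hs']
        _ = ∑ j : σ, ((s - Finsupp.single i 1 : σ →₀ ℕ) j + (Finsupp.single i 1 : σ →₀ ℕ) j) :=
            Finset.sum_congr rfl fun j _ => Finsupp.add_apply _ _ _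
        _ = (∑ j : σ, (s - Finsupp.single i 1 : σ →₀ ℕ) j)
            + ∑ j : σ, (Finsupp.single i 1 : σ →₀ ℕ) j := Finset.sum_add_distrib
        _ = (∑ j : σ, (s - Finsupp.single i 1 : σ →₀ ℕ) j) + 1 := by rw [hsingle]
    rw [degree_univ] at hdeg ⊢
    omega

lemma isHomogeneous_Dop {f : MvPolynomial σ ℝ} {d : ℕ} (hf : f.IsHomogeneous (d + 1))
    (v : σ → ℝ) : (Dop v f).IsHomogeneous d := by
  apply MvPolynomial.IsHomogeneous.sum
  intro i _
  exact (isHomogeneous_pderiv hf i).C_mul _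

lemma euler {f : MvPolynomial σ ℝ} {d : ℕ} (hf : f.IsHomogeneous d) :
    ∑ i : σ, X i * pderiv i f = C (d : ℝ) * f := by
  have key : ∀ s ∈ f.support, ∀ a : ℝ,
      ∑ i : σ, X i * pderiv i (monomial s a) = C (d : ℝ) * monomial s a := by
    intro s hs a
    have hdeg : s.degree = d := by
      rw [Finsupp.degree_eq_weight_one]
      exact hf (MvPolynomial.mem_support_iff.mp hs)
    have hterm : ∀ i : σ, X i * pderiv i (monomial s a) = monomial s ((s i : ℝ) * a) := by
      intro i
      rw [pderiv_monomial]
      by_cases hsi : s i = 0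
      · simp [hsi]
      · have hle : Finsupp.single i 1 ≤ s :=
          Finsupp.single_le_iff.mpr (Nat.one_le_iff_ne_zero.mpr hsi)
        have hss : Finsupp.single i 1 + (s - Finsupp.single i 1) = s :=
          add_tsub_cancel_of_le hle
        calc X i * monomial (s - Finsupp.single i 1) (a * s i)
            = X i ^ 1 * monomial (s - Finsupp.single i 1) (a * s i) := by rw [pow_one]
          _ = monomial (Finsupp.single i 1 + (s - Finsupp.single i 1)) (a * s i) :=
              (monomial_single_add).symm
          _ = monomial s ((s i : ℝ) * a) := by rw [hss, mul_comm]
    rw [Finset.sum_congr rfl fun i _ => hterm i, ← map_sum (monomial s), ← Finset.sum_mul,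
      C_mul_monomial]
    congr 1
    rw [← Nat.cast_sum, ← degree_univ, hdeg]
  conv_lhs => rw [f.as_sum]
  conv_rhs => rw [f.as_sum, Finset.mul_sum]
  simp only [map_sum, Finset.mul_sum]
  rw [Finset.sum_comm]
  exact Finset.sum_congr rfl fun s hs => key s hs _

end Stmt9Aux

theorem stmt_9 (n r : ℕ) (hr : 1 ≤ r) (S : Set (Fin r → ℝ))
    (F : MvPolynomial (Fin r) ℝ) (hF : F.IsHomogeneous (n + 2))
    (hvan : ∀ L : List (Fin r), L.length ≤ n → ∀ p ∈ S,
      MvPolynomial.eval p (L.foldr (fun v Q => MvPolynomial.pderiv v Q) F) = 0)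
    (p : Fin (n + 1) → (Fin r → ℝ)) (hp : ∀ i, p i ∈ S)
    (y : Fin (n + 1) → ℝ) :
    MvPolynomial.eval (∑ i, y i • p i) F = 0 := by
  classical
  set x : Fin r → ℝ := ∑ i, y i • p i with hx
  -- auxiliary facts about foldr with pderiv
  have foldr_pderiv_C_mul : ∀ (K : List (Fin r)) (c : ℝ) (Q : MvPolynomial (Fin r) ℝ),
      K.foldr (fun v Q => pderiv v Q) (C c * Q) = C c * K.foldr (fun v Q => pderiv v Q) Q := by
    intro K
    induction K with
    | nil => intro c Q; rfl
    | cons v K ih => intro c Q; simp only [List.foldr_cons, ih, pderiv_C_mul]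
  have foldr_pderiv_sum : ∀ (K : List (Fin r)) (s : Finset (Fin r))
      (g : Fin r → MvPolynomial (Fin r) ℝ),
      K.foldr (fun v Q => pderiv v Q) (∑ i ∈ s, g i)
        = ∑ i ∈ s, K.foldr (fun v Q => pderiv v Q) (g i) := by
    intro K
    induction K with
    | nil => intro s g; rfl
    | cons v K ih => intro s g; simp only [List.foldr_cons, ih, map_sum]
  -- vanishing of derivatives of directional derivatives on S
  have foldr_van : ∀ (M : List (Fin (n + 1))) (K : List (Fin r)),
      M.length + K.length ≤ n → ∀ q ∈ S,
      MvPolynomial.eval q (K.foldr (fun v Q => pderiv v Q)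
        (M.foldr (fun j Q => Stmt9Aux.Dop (p j) Q) F)) = 0 := by
    intro M
    induction M with
    | nil => intro K h q hq; exact hvan K (by simpa using h) q hq
    | cons j M ih =>
      intro K h q hq
      rw [List.foldr_cons, Stmt9Aux.Dop, foldr_pderiv_sum, map_sum]
      refine Finset.sum_eq_zero fun i _ => ?_
      rw [foldr_pderiv_C_mul, map_mul, eval_C]
      have hK : K.foldr (fun v Q => pderiv v Q)
          (pderiv i (M.foldr (fun j Q => Stmt9Aux.Dop (p j) Q) F))
          = (K ++ [i]).foldr (fun v Q => pderiv v Q)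
            (M.foldr (fun j Q => Stmt9Aux.Dop (p j) Q) F) := by
        rw [List.foldr_append]
        rfl
      rw [hK, ih (K ++ [i]) (by simp only [List.length_cons] at h; simp; omega) q hq, mul_zero]
  -- homogeneity of iterated directional derivatives
  have foldr_homog : ∀ (M : List (Fin (n + 1))) (d : ℕ) (f : MvPolynomial (Fin r) ℝ),
      f.IsHomogeneous (M.length + d) →
      (M.foldr (fun j Q => Stmt9Aux.Dop (p j) Q) f).IsHomogeneous d := by
    intro M
    induction M with
    | nil => intro d f hf; simpa using hf
    | cons j M ih =>
      intro d f hf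
      rw [List.foldr_cons]
      refine Stmt9Aux.isHomogeneous_Dop (ih (d + 1) f ?_) (p j)
      have : M.length + (d + 1) = (j :: M).length + d := by simp; omega
      rw [this]; exact hf
  -- homogeneous of degree 0 means constant
  have homog0_eval : ∀ (f : MvPolynomial (Fin r) ℝ), f.IsHomogeneous 0 →
      ∀ v w : Fin r → ℝ, MvPolynomial.eval v f = MvPolynomial.eval w f := by
    intro f hf v w
    have hfC : f = C (MvPolynomial.coeff 0 f) := by
      ext m
      by_cases hm : m = 0
      · subst hm; simp
      · rw [hf.coeff_eq_zero (by rw [Ne, Finsupp.degree_eq_zero_iff]; exact hm),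
          MvPolynomial.coeff_C, if_neg (Ne.symm hm)]
    rw [hfC]; simp
  -- Euler identity, evaluated
  have euler_eval : ∀ (d : ℕ) (f : MvPolynomial (Fin r) ℝ) (v : Fin r → ℝ),
      f.IsHomogeneous d →
      MvPolynomial.eval v (Stmt9Aux.Dop v f) = d * MvPolynomial.eval v f := by
    intro d f v hf
    have h := congrArg (MvPolynomial.eval v) (Stmt9Aux.euler hf)
    simp only [map_sum, map_mul, eval_X, eval_C] at h
    rw [Stmt9Aux.Dop, map_sum]
    simp only [map_mul, eval_C]
    exact h
  -- iterated directional derivative of a homogeneous polynomial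
  have iter_eval : ∀ (d : ℕ) (f : MvPolynomial (Fin r) ℝ) (v : Fin r → ℝ),
      f.IsHomogeneous d →
      MvPolynomial.eval (0 : Fin r → ℝ) ((Stmt9Aux.Dop v)^[d] f)
        = d.factorial * MvPolynomial.eval v f := by
    intro d
    induction d with
    | zero => intro f v hf; simpa using homog0_eval f hf 0 v
    | succ d ih =>
      intro f v hf
      rw [Function.iterate_succ_apply]
      rw [ih _ v (Stmt9Aux.isHomogeneous_Dop hf v), euler_eval (d + 1) f v hf]
      push_cast [Nat.factorial_succ]
      ring
  -- decomposition of Dop x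
  have hDx : ∀ Q : MvPolynomial (Fin r) ℝ,
      Stmt9Aux.Dop x Q = ∑ i, C (y i) * Stmt9Aux.Dop (p i) Q := by
    intro Q
    have hxv : ∀ v, C (x v) = ∑ i, (C (y i) * C (p i v) : MvPolynomial (Fin r) ℝ) := by
      intro v
      rw [hx]
      simp only [Finset.sum_apply, Pi.smul_apply, smul_eq_mul, map_sum, map_mul]
    rw [Stmt9Aux.Dop]
    calc ∑ v, C (x v) * pderiv v Q
        = ∑ v, ∑ i, C (y i) * (C (p i v) * pderiv v Q) := by
          refine Finset.sum_congr rfl fun v _ => ?_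
          rw [hxv v, Finset.sum_mul]
          exact Finset.sum_congr rfl fun i _ => by ring
      _ = ∑ i, ∑ v, C (y i) * (C (p i v) * pderiv v Q) := Finset.sum_comm
      _ = ∑ i, C (y i) * Stmt9Aux.Dop (p i) Q := by
          refine Finset.sum_congr rfl fun i _ => ?_
          rw [Stmt9Aux.Dop, Finset.mul_sum]
  -- multinomial-type expansion of iterated Dop x
  have expand : ∀ (m : ℕ),
      (Stmt9Aux.Dop x)^[m] F = ∑ g : Fin m → Fin (n + 1),
        C (∏ k, y (g k)) * ((List.ofFn g).foldr (fun j Q => Stmt9Aux.Dop (p j) Q) F) := by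
    intro m
    induction m with
    | zero =>
      rw [Fintype.sum_unique]
      simp
    | succ m ih =>
      rw [Function.iterate_succ_apply', ih, Stmt9Aux.Dop_sum]
      have step : ∀ g : Fin m → Fin (n + 1),
          Stmt9Aux.Dop x (C (∏ k, y (g k)) *
            ((List.ofFn g).foldr (fun j Q => Stmt9Aux.Dop (p j) Q) F))
          = ∑ i, C (y i * ∏ k, y (g k)) *
              ((List.ofFn (Fin.cons i g : Fin (m + 1) → Fin (n + 1))).foldr
                (fun j Q => Stmt9Aux.Dop (p j) Q) F) := by
        intro g
        rw [Stmt9Aux.Dop_C_mul, hDx, Finset.mul_sum]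
        refine Finset.sum_congr rfl fun i _ => ?_
        have hofn : List.ofFn (Fin.cons i g : Fin (m + 1) → Fin (n + 1))
            = i :: List.ofFn g := by
          rw [List.ofFn_succ]
          simp [Fin.cons_zero, Fin.cons_succ]
        rw [hofn, List.foldr_cons, map_mul]
        ring
      rw [Finset.sum_congr rfl fun g _ => step g]
      have reindex : (∑ h : Fin (m + 1) → Fin (n + 1),
            C (∏ k, y (h k)) * ((List.ofFn h).foldr (fun j Q => Stmt9Aux.Dop (p j) Q) F))
          = ∑ q : Fin (n + 1) × (Fin m → Fin (n + 1)),
            C (∏ k, y ((Fin.cons q.1 q.2 : Fin (m + 1) → Fin (n + 1)) k)) *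
              ((List.ofFn (Fin.cons q.1 q.2 : Fin (m + 1) → Fin (n + 1))).foldr
                (fun j Q => Stmt9Aux.Dop (p j) Q) F) :=
        (Fintype.sum_equiv (Fin.consEquiv fun _ => Fin (n + 1)) _ _ fun q => rfl).symm
      rw [reindex, Fintype.sum_prod_type, Finset.sum_comm]
      refine Finset.sum_congr rfl fun g _ => Finset.sum_congr rfl fun i _ => ?_
      congr 2
      rw [Fin.prod_univ_succ]
      simp [Fin.cons_zero, Fin.cons_succ]
  -- each term in the expansion has a repeated index and hence vanishes at 0
  have key : ∀ g : Fin (n + 2) → Fin (n + 1),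
      MvPolynomial.eval (0 : Fin r → ℝ)
        ((List.ofFn g).foldr (fun j Q => Stmt9Aux.Dop (p j) Q) F) = 0 := by
    intro g
    have hninj : ¬ Function.Injective g := by
      intro hinj
      have := Fintype.card_le_of_injective g hinj
      simp [Fintype.card_fin] at this
    have hnodup : ¬ (List.ofFn g).Nodup := fun h => hninj (List.nodup_ofFn.mp h)
    obtain ⟨c, hc⟩ := List.exists_duplicate_iff_not_nodup.mpr hnodup
    obtain ⟨t, ht⟩ := (List.duplicate_iff_sublist.mp hc).exists_perm_append
    haveI : LeftCommutative (fun j Q => Stmt9Aux.Dop (p j) Q) :=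
      ⟨fun a b Q => Stmt9Aux.Dop_comm (p a) (p b) Q⟩
    rw [ht.foldr_eq]
    have hlen : t.length = n := by
      have hlen2 := ht.length_eq
      simp only [List.length_ofFn, List.length_append, List.length_cons,
        List.length_nil] at hlen2
      omega
    have hH2 : (t.foldr (fun j Q => Stmt9Aux.Dop (p j) Q) F).IsHomogeneous 2 :=
      foldr_homog t 2 F (by rw [hlen]; exact hF)
    set H := t.foldr (fun j Q => Stmt9Aux.Dop (p j) Q) F with hH
    have hfold : ([c, c] ++ t).foldr (fun j Q => Stmt9Aux.Dop (p j) Q) F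
        = Stmt9Aux.Dop (p c) (Stmt9Aux.Dop (p c) H) := rfl
    rw [hfold]
    have h1 : (Stmt9Aux.Dop (p c) H).IsHomogeneous 1 := Stmt9Aux.isHomogeneous_Dop hH2 _
    have h0 : (Stmt9Aux.Dop (p c) (Stmt9Aux.Dop (p c) H)).IsHomogeneous 0 :=
      Stmt9Aux.isHomogeneous_Dop h1 _
    have hHv : MvPolynomial.eval (p c) H = 0 := by
      have h5 := foldr_van t [] (by simp [hlen]) (p c) (hp c)
      simpa using h5
    rw [homog0_eval _ h0 0 (p c), euler_eval 1 _ (p c) h1, euler_eval 2 H (p c) hH2, hHv]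
    ring
  -- assemble
  have main := iter_eval (n + 2) F x hF
  rw [expand (n + 2), map_sum] at main
  rw [Finset.sum_eq_zero (fun g _ => by rw [map_mul, key g, mul_zero])] at main
  have hfac : ((n + 2).factorial : ℝ) ≠ 0 :=
    Nat.cast_ne_zero.mpr (Nat.factorial_ne_zero _)
  exact ((mul_eq_zero.mp main.symm).resolve_left hfac)
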